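/- Let L₂₂ : ℝᵐ → Sᵖ be an affine map (p×p symmetric matrix valued) and suppose there exists a positive definite X₂₂ ∈ Sᵖ with trace(X₂₂ · L₂₂(y)) = 0 for all y ∈ ℝᵐ. Then there exists a constant M > 0 such that for all t ≥ 0 and all y ∈ ℝᵐ, if L₂₂(y) + t·I is positive semidefinite then tM·I − (L₂₂(y) + t·I) is positive semidefinite. -/

import Mathlib

open Matrix Finset

section Aux
variable {p : ℕ}

private lemma real_spectral (A : Matrix (Fin p) (Fin p) ℝ) (hA : A.IsHermitian) :
    A = (hA.eigenvectorUnitary : Matrix (Fin p) (Fin p) ℝ) * diagonal hA.eigenvalues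
      * (hA.eigenvectorUnitary : Matrix (Fin p) (Fin p) ℝ)ᴴ := by
  have := hA.spectral_theorem
  simpa [Function.comp, Matrix.star_eq_conjTranspose] using this

private lemma my_trace_eq_sum_eigenvalues (A : Matrix (Fin p) (Fin p) ℝ) (hA : A.IsHermitian) :
    A.trace = ∑ i, hA.eigenvalues i := by
  conv_lhs => rw [real_spectral A hA]
  rw [Matrix.trace_mul_cycle]
  have hU : (hA.eigenvectorUnitary : Matrix (Fin p) (Fin p) ℝ)ᴴ *
      (hA.eigenvectorUnitary : Matrix (Fin p) (Fin p) ℝ) = 1 := by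
    simpa [Matrix.star_eq_conjTranspose] using
      (Matrix.mem_unitaryGroup_iff').mp hA.eigenvectorUnitary.2
  rw [hU, one_mul, Matrix.trace_diagonal]

private lemma smul_one_sub_posSemidef (A : Matrix (Fin p) (Fin p) ℝ) (hA : A.IsHermitian) (c : ℝ)
    (h : ∀ i, hA.eigenvalues i ≤ c) : (c • (1 : Matrix (Fin p) (Fin p) ℝ) - A).PosSemidef := by
  have hU : (hA.eigenvectorUnitary : Matrix (Fin p) (Fin p) ℝ) *
      (hA.eigenvectorUnitary : Matrix (Fin p) (Fin p) ℝ)ᴴ = 1 := by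
    simpa [Matrix.star_eq_conjTranspose] using
      (Matrix.mem_unitaryGroup_iff).mp hA.eigenvectorUnitary.2
  have key : c • (1 : Matrix (Fin p) (Fin p) ℝ) - A =
      (hA.eigenvectorUnitary : Matrix (Fin p) (Fin p) ℝ) *
        diagonal (fun i => c - hA.eigenvalues i) *
        (hA.eigenvectorUnitary : Matrix (Fin p) (Fin p) ℝ)ᴴ := by
    have : diagonal (fun i => c - hA.eigenvalues i) =
        c • (1 : Matrix (Fin p) (Fin p) ℝ) - diagonal hA.eigenvalues := by
      rw [Matrix.smul_one_eq_diagonal, Matrix.diagonal_sub]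
    rw [this, Matrix.mul_sub, Matrix.sub_mul, mul_smul_comm, Matrix.smul_mul,
      Matrix.mul_one, hU, ← real_spectral A hA]
  rw [key]
  exact (Matrix.PosSemidef.diagonal (fun i => by simpa using h i)).mul_mul_conjTranspose_same _

private lemma sub_smul_one_posSemidef (A : Matrix (Fin p) (Fin p) ℝ) (hA : A.IsHermitian) (c : ℝ)
    (h : ∀ i, c ≤ hA.eigenvalues i) : (A - c • (1 : Matrix (Fin p) (Fin p) ℝ)).PosSemidef := by
  have hU : (hA.eigenvectorUnitary : Matrix (Fin p) (Fin p) ℝ) *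
      (hA.eigenvectorUnitary : Matrix (Fin p) (Fin p) ℝ)ᴴ = 1 := by
    simpa [Matrix.star_eq_conjTranspose] using
      (Matrix.mem_unitaryGroup_iff).mp hA.eigenvectorUnitary.2
  have key : A - c • (1 : Matrix (Fin p) (Fin p) ℝ) =
      (hA.eigenvectorUnitary : Matrix (Fin p) (Fin p) ℝ) *
        diagonal (fun i => hA.eigenvalues i - c) *
        (hA.eigenvectorUnitary : Matrix (Fin p) (Fin p) ℝ)ᴴ := by
    have : diagonal (fun i => hA.eigenvalues i - c) =
        diagonal hA.eigenvalues - c • (1 : Matrix (Fin p) (Fin p) ℝ) := by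
      rw [Matrix.smul_one_eq_diagonal, Matrix.diagonal_sub]
    rw [this, Matrix.mul_sub, Matrix.sub_mul, mul_smul_comm, Matrix.smul_mul,
      Matrix.mul_one, hU, ← real_spectral A hA]
  rw [key]
  exact (Matrix.PosSemidef.diagonal (fun i => by simpa using h i)).mul_mul_conjTranspose_same _

private lemma my_trace_nonneg {A : Matrix (Fin p) (Fin p) ℝ} (hA : A.PosSemidef) :
    0 ≤ A.trace := by
  rw [my_trace_eq_sum_eigenvalues A hA.1]
  exact Finset.sum_nonneg fun i _ => hA.eigenvalues_nonneg i

open scoped MatrixOrder in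
private lemma my_trace_mul_nonneg {A B : Matrix (Fin p) (Fin p) ℝ}
    (hA : A.PosSemidef) (hB : B.PosSemidef) : 0 ≤ (A * B).trace := by
  have h1 : A * B = CFC.sqrt A * (CFC.sqrt A * B) := by
    rw [← mul_assoc, CFC.sqrt_mul_sqrt_self A hA.nonneg]
  rw [h1, Matrix.trace_mul_comm]
  have h2 : CFC.sqrt A * B * CFC.sqrt A = CFC.sqrt A * B * (CFC.sqrt A)ᴴ := by
    rw [(CFC.sqrt_nonneg A).posSemidef.1.eq]
  rw [h2]
  exact my_trace_nonneg (hB.mul_mul_conjTranspose_same _)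

private lemma smul_one_posSemidef {c : ℝ} (hc : 0 ≤ c) :
    (c • (1 : Matrix (Fin p) (Fin p) ℝ)).PosSemidef := by
  rw [Matrix.smul_one_eq_diagonal]
  exact Matrix.PosSemidef.diagonal fun i => hc

end Aux

/-- Boundedness lemma: if `L₂₂` is an affine symmetric-matrix-valued map and
there is a positive definite `X₂₂` with `trace(X₂₂ · L₂₂(y)) = 0` for all `y`,
then there is `M > 0` with `t·M·I ⪰ L₂₂(y) + t·I` whenever `L₂₂(y) + t·I ⪰ 0`. -/
theorem boundedness_lemma {m p : ℕ}
    (L₂₂ : (Fin m → ℝ) → Matrix (Fin p) (Fin p) ℝ)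
    (hsymm : ∀ y, (L₂₂ y).IsSymm)
    (haff : ∀ (y z : Fin m → ℝ) (a b : ℝ), a + b = 1 →
      L₂₂ (a • y + b • z) = a • L₂₂ y + b • L₂₂ z)
    (X₂₂ : Matrix (Fin p) (Fin p) ℝ) (hX : X₂₂.PosDef)
    (horth : ∀ y, (X₂₂ * L₂₂ y).trace = 0) :
    ∃ M : ℝ, 0 < M ∧ ∀ t : ℝ, 0 ≤ t → ∀ y : Fin m → ℝ,
      (L₂₂ y + t • (1 : Matrix (Fin p) (Fin p) ℝ)).PosSemidef →
      ((t * M) • (1 : Matrix (Fin p) (Fin p) ℝ)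
        - (L₂₂ y + t • (1 : Matrix (Fin p) (Fin p) ℝ))).PosSemidef := by
  rcases Nat.eq_zero_or_pos p with hp | hp
  · -- trivial case p = 0
    subst hp
    refine ⟨1, one_pos, fun t ht y hA => ?_⟩
    constructor
    · ext i j; exact i.elim0
    · intro x
      simp [dotProduct, Subsingleton.elim x 0]
  · have : Nonempty (Fin p) := ⟨⟨0, hp⟩⟩
    -- smallest eigenvalue of X₂₂
    set ε : ℝ := Finset.univ.inf' Finset.univ_nonempty hX.1.eigenvalues with hε_def
    have hε : 0 < ε := by
      rw [hε_def, Finset.lt_inf'_iff]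
      exact fun i _ => hX.eigenvalues_pos i
    have hXε : (X₂₂ - ε • (1 : Matrix (Fin p) (Fin p) ℝ)).PosSemidef :=
      sub_smul_one_posSemidef X₂₂ hX.1 ε fun i => Finset.inf'_le _ (Finset.mem_univ i)
    have htrX : 0 ≤ X₂₂.trace := my_trace_nonneg hX.posSemidef
    refine ⟨X₂₂.trace / ε + 1, by positivity, fun t ht y hA => ?_⟩
    set A := L₂₂ y + t • (1 : Matrix (Fin p) (Fin p) ℝ) with hA_def
    set M : ℝ := X₂₂.trace / ε + 1 with hM_def
    -- trace(X₂₂ A) = t * trace X₂₂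
    have htr1 : (X₂₂ * A).trace = t * X₂₂.trace := by
      rw [hA_def, Matrix.mul_add, Matrix.trace_add, horth, zero_add, mul_smul_comm,
        Matrix.mul_one, Matrix.trace_smul, smul_eq_mul]
    -- ε * trace A ≤ trace(X₂₂ A)
    have htr2 : ε * A.trace ≤ (X₂₂ * A).trace := by
      have h0 : 0 ≤ ((X₂₂ - ε • (1 : Matrix (Fin p) (Fin p) ℝ)) * A).trace :=
        my_trace_mul_nonneg hXε hA
      rw [Matrix.sub_mul, Matrix.trace_sub, Matrix.smul_mul, Matrix.one_mul,
        Matrix.trace_smul, smul_eq_mul] at h0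
      linarith
    have hMε : M * ε = X₂₂.trace + ε := by
      rw [hM_def]; field_simp
    have hkey : A.trace ≤ t * M := by
      nlinarith [mul_nonneg ht hε.le, htr2, htr1]
    -- decompose
    have h1 : (A.trace • (1 : Matrix (Fin p) (Fin p) ℝ) - A).PosSemidef := by
      refine smul_one_sub_posSemidef A hA.1 _ fun i => ?_
      rw [my_trace_eq_sum_eigenvalues A hA.1]
      exact Finset.single_le_sum (fun j _ => hA.eigenvalues_nonneg j) (Finset.mem_univ i)
    have h2 : ((t * M - A.trace) • (1 : Matrix (Fin p) (Fin p) ℝ)).PosSemidef :=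
      smul_one_posSemidef (by linarith)
    have hdec : (t * M) • (1 : Matrix (Fin p) (Fin p) ℝ) - A =
        (t * M - A.trace) • (1 : Matrix (Fin p) (Fin p) ℝ)
          + (A.trace • (1 : Matrix (Fin p) (Fin p) ℝ) - A) := by
      module
    rw [hdec]
    exact h2.add h1
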